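/- Let γ(u) = (α(u), β(u)) be a regular C² curve in ℝ². Define σ(u) = (−α(u), −β(u), 1)/√(1 + α(u)² + β(u)²), a curve on the unit sphere S² ⊂ ℝ³. Then γ is regular with (signed) curvature of constant sign (everywhere positive, resp. everywhere negative) if and only if σ is a regular curve on S² with geodesic curvature of the corresponding constant sign (everywhere positive, resp. everywhere negative). -/

import Mathlib

/-- Euclidean dot product on ℝ³ = ℝ × ℝ × ℝ. -/
def dot3 (a b : ℝ × ℝ × ℝ) : ℝ := a.1 * b.1 + a.2.1 * b.2.1 + a.2.2 * b.2.2

/-- Cross product on ℝ³ = ℝ × ℝ × ℝ. -/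
def cross3 (a b : ℝ × ℝ × ℝ) : ℝ × ℝ × ℝ :=
  (a.2.1 * b.2.2 - a.2.2 * b.2.1, a.2.2 * b.1 - a.1 * b.2.2, a.1 * b.2.1 - a.2.1 * b.1)

/-- Auxiliary computation: for a curve of the form `σ = (f·a, f·b, f)` with twice
differentiable data, we compute the first derivative and the triple product
`⟨σ'', σ × σ'⟩ = f³ (a₁ b₂ − b₁ a₂)`. -/
lemma sigma_calc (f a b f1 a1 b1 f2 a2 b2 : ℝ → ℝ)
    (hf : ∀ u, HasDerivAt f (f1 u) u) (ha : ∀ u, HasDerivAt a (a1 u) u)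
    (hb : ∀ u, HasDerivAt b (b1 u) u)
    (hf1 : ∀ u, HasDerivAt f1 (f2 u) u) (ha1 : ∀ u, HasDerivAt a1 (a2 u) u)
    (hb1 : ∀ u, HasDerivAt b1 (b2 u) u)
    (σ : ℝ → ℝ × ℝ × ℝ) (hσ : σ = fun u => (f u * a u, f u * b u, f u)) :
    (∀ u, deriv σ u = (f1 u * a u + f u * a1 u, f1 u * b u + f u * b1 u, f1 u)) ∧
    (∀ u, dot3 (deriv (deriv σ) u) (cross3 (σ u) (deriv σ u)) =
      f u ^ 3 * (a1 u * b2 u - b1 u * a2 u)) := by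
  subst hσ
  have hD1 : ∀ u, HasDerivAt (fun u => ((f u * a u, f u * b u, f u) : ℝ × ℝ × ℝ))
      ((f1 u * a u + f u * a1 u, f1 u * b u + f u * b1 u, f1 u) : ℝ × ℝ × ℝ) u := fun u =>
    ((hf u).mul (ha u)).prodMk ((((hf u).mul (hb u))).prodMk (hf u))
  have e1 : deriv (fun u => ((f u * a u, f u * b u, f u) : ℝ × ℝ × ℝ)) =
      fun u => ((f1 u * a u + f u * a1 u, f1 u * b u + f u * b1 u, f1 u) : ℝ × ℝ × ℝ) :=
    funext fun u => (hD1 u).deriv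
  have hD2 : ∀ u, HasDerivAt
      (fun u => ((f1 u * a u + f u * a1 u, f1 u * b u + f u * b1 u, f1 u) : ℝ × ℝ × ℝ))
      ((f2 u * a u + f1 u * a1 u + (f1 u * a1 u + f u * a2 u),
        f2 u * b u + f1 u * b1 u + (f1 u * b1 u + f u * b2 u), f2 u) : ℝ × ℝ × ℝ) u := fun u =>
    ((((hf1 u).mul (ha u)).add ((hf u).mul (ha1 u))).prodMk
      (((((hf1 u).mul (hb u)).add ((hf u).mul (hb1 u)))).prodMk (hf1 u)))
  refine ⟨fun u => by rw [e1], fun u => ?_⟩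
  rw [e1]
  have e2 : deriv (fun u =>
      ((f1 u * a u + f u * a1 u, f1 u * b u + f u * b1 u, f1 u) : ℝ × ℝ × ℝ)) u =
      ((f2 u * a u + f1 u * a1 u + (f1 u * a1 u + f u * a2 u),
        f2 u * b u + f1 u * b1 u + (f1 u * b1 u + f u * b2 u), f2 u) : ℝ × ℝ × ℝ) :=
    (hD2 u).deriv
  rw [e2]
  simp only [dot3, cross3]
  ring

/-- Let γ = (α,β) be a regular C² plane curve and
σ = (−α,−β,1)/√(1+α²+β²) the associated curve on S². Then γ has signed curvature of
constant sign (the sign of α'β'' − β'α'') if and only if σ is regular with geodesic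
curvature (sign of ⟨σ'', σ × σ'⟩) of the same constant sign. -/
theorem stmt13 (α β : ℝ → ℝ)
    (hα : ContDiff ℝ 2 α) (hβ : ContDiff ℝ 2 β)
    (hreg : ∀ u, (deriv α u, deriv β u) ≠ (0, 0))
    (σ : ℝ → ℝ × ℝ × ℝ)
    (hσ : ∀ u, σ u = (Real.sqrt (1 + (α u) ^ 2 + (β u) ^ 2))⁻¹ •
      ((-α u, -β u, 1) : ℝ × ℝ × ℝ)) :
    ((∀ u, 0 < deriv α u * deriv (deriv β) u - deriv β u * deriv (deriv α) u) ↔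
      ((∀ u, deriv σ u ≠ 0) ∧
        ∀ u, 0 < dot3 (deriv (deriv σ) u) (cross3 (σ u) (deriv σ u)))) ∧
    ((∀ u, deriv α u * deriv (deriv β) u - deriv β u * deriv (deriv α) u < 0) ↔
      ((∀ u, deriv σ u ≠ 0) ∧
        ∀ u, dot3 (deriv (deriv σ) u) (cross3 (σ u) (deriv σ u)) < 0)) := by
  -- differentiability facts
  have hαd : Differentiable ℝ α := hα.differentiable (by norm_num)
  have hβd : Differentiable ℝ β := hβ.differentiable (by norm_num)
  have hdα : Differentiable ℝ (deriv α) := by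
    have h2 : ContDiff ℝ (1 + 1) α := by exact_mod_cast hα
    exact ((contDiff_succ_iff_deriv.mp h2).2.2).differentiable one_ne_zero
  have hdβ : Differentiable ℝ (deriv β) := by
    have h2 : ContDiff ℝ (1 + 1) β := by exact_mod_cast hβ
    exact ((contDiff_succ_iff_deriv.mp h2).2.2).differentiable one_ne_zero
  have hA1 : ∀ u, HasDerivAt α (deriv α u) u := fun u => (hαd u).hasDerivAt
  have hB1 : ∀ u, HasDerivAt β (deriv β u) u := fun u => (hβd u).hasDerivAt
  have hA2 : ∀ u, HasDerivAt (deriv α) (deriv (deriv α) u) u := fun u => (hdα u).hasDerivAt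
  have hB2 : ∀ u, HasDerivAt (deriv β) (deriv (deriv β) u) u := fun u => (hdβ u).hasDerivAt
  -- Q, its square root r, and f = r⁻¹
  have hQpos : ∀ u, (0 : ℝ) < 1 + α u ^ 2 + β u ^ 2 := fun u => by positivity
  have hQ1 : ∀ u, HasDerivAt (fun u => 1 + α u ^ 2 + β u ^ 2)
      (2 * α u * deriv α u + 2 * β u * deriv β u) u := by
    intro u
    have h := ((hasDerivAt_const u (1 : ℝ)).add ((hA1 u).pow 2)).add ((hB1 u).pow 2)
    simp at h
    exact h
  have hr1 : ∀ u, HasDerivAt (fun u => Real.sqrt (1 + α u ^ 2 + β u ^ 2))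
      ((2 * α u * deriv α u + 2 * β u * deriv β u) /
        (2 * Real.sqrt (1 + α u ^ 2 + β u ^ 2))) u := fun u =>
    (hQ1 u).sqrt (ne_of_gt (hQpos u))
  have hrpos : ∀ u, 0 < Real.sqrt (1 + α u ^ 2 + β u ^ 2) := fun u =>
    Real.sqrt_pos.mpr (hQpos u)
  have hrd : Differentiable ℝ (fun u => Real.sqrt (1 + α u ^ 2 + β u ^ 2)) := fun u =>
    (hr1 u).differentiableAt
  have hF : ∀ u, HasDerivAt (fun u => (Real.sqrt (1 + α u ^ 2 + β u ^ 2))⁻¹)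
      (-((2 * α u * deriv α u + 2 * β u * deriv β u) /
          (2 * Real.sqrt (1 + α u ^ 2 + β u ^ 2))) /
        (Real.sqrt (1 + α u ^ 2 + β u ^ 2)) ^ 2) u := fun u =>
    (hr1 u).inv (ne_of_gt (hrpos u))
  -- F1 is differentiable
  have hF1d : Differentiable ℝ (fun u =>
      -((2 * α u * deriv α u + 2 * β u * deriv β u) /
          (2 * Real.sqrt (1 + α u ^ 2 + β u ^ 2))) /
        (Real.sqrt (1 + α u ^ 2 + β u ^ 2)) ^ 2) := by
    have hnum : Differentiable ℝ (fun u => 2 * α u * deriv α u + 2 * β u * deriv β u) :=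
      ((((differentiable_const (2:ℝ)).mul hαd).mul hdα).add
        (((differentiable_const (2:ℝ)).mul hβd).mul hdβ))
    have hden1 : Differentiable ℝ (fun u => 2 * Real.sqrt (1 + α u ^ 2 + β u ^ 2)) :=
      (differentiable_const (2:ℝ)).mul hrd
    have hq : Differentiable ℝ (fun u =>
        (2 * α u * deriv α u + 2 * β u * deriv β u) /
          (2 * Real.sqrt (1 + α u ^ 2 + β u ^ 2))) :=
      hnum.div hden1 (fun u => by positivity)
    exact hq.neg.div (hrd.pow 2) (fun u => by positivity)
  have hF2 : ∀ u, HasDerivAt (fun u =>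
      -((2 * α u * deriv α u + 2 * β u * deriv β u) /
          (2 * Real.sqrt (1 + α u ^ 2 + β u ^ 2))) /
        (Real.sqrt (1 + α u ^ 2 + β u ^ 2)) ^ 2)
      (deriv (fun u =>
        -((2 * α u * deriv α u + 2 * β u * deriv β u) /
            (2 * Real.sqrt (1 + α u ^ 2 + β u ^ 2))) /
          (Real.sqrt (1 + α u ^ 2 + β u ^ 2)) ^ 2) u) u := fun u =>
    (hF1d u).hasDerivAt
  -- rewrite σ
  have hσfun : σ = fun u => ((Real.sqrt (1 + α u ^ 2 + β u ^ 2))⁻¹ * (-α u),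
      (Real.sqrt (1 + α u ^ 2 + β u ^ 2))⁻¹ * (-β u),
      (Real.sqrt (1 + α u ^ 2 + β u ^ 2))⁻¹) := by
    funext u
    rw [hσ u]
    simp [Prod.smul_mk, smul_eq_mul]
  -- apply the general computation
  obtain ⟨hderiv, hdot⟩ := sigma_calc
    (fun u => (Real.sqrt (1 + α u ^ 2 + β u ^ 2))⁻¹)
    (fun u => -α u) (fun u => -β u)
    (fun u => -((2 * α u * deriv α u + 2 * β u * deriv β u) /
        (2 * Real.sqrt (1 + α u ^ 2 + β u ^ 2))) /
      (Real.sqrt (1 + α u ^ 2 + β u ^ 2)) ^ 2)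
    (fun u => -deriv α u) (fun u => -deriv β u)
    (fun u => deriv (fun u =>
      -((2 * α u * deriv α u + 2 * β u * deriv β u) /
          (2 * Real.sqrt (1 + α u ^ 2 + β u ^ 2))) /
        (Real.sqrt (1 + α u ^ 2 + β u ^ 2)) ^ 2) u)
    (fun u => -deriv (deriv α) u) (fun u => -deriv (deriv β) u)
    hF (fun u => (hA1 u).neg) (fun u => (hB1 u).neg)
    hF2 (fun u => (hA2 u).neg) (fun u => (hB2 u).neg)
    σ hσfun
  have hFpos : ∀ u, 0 < (Real.sqrt (1 + α u ^ 2 + β u ^ 2))⁻¹ := fun u =>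
    inv_pos.mpr (hrpos u)
  -- regularity of σ is automatic
  have hregσ : ∀ u, deriv σ u ≠ 0 := by
    intro u h
    rw [hderiv u] at h
    rw [Prod.ext_iff, Prod.ext_iff] at h
    simp only [Prod.fst_zero, Prod.snd_zero] at h
    obtain ⟨h1, h2, h3⟩ := h
    rw [h3, zero_mul, zero_add] at h1 h2
    have hα0 : deriv α u = 0 := by
      have := mul_eq_zero.mp h1
      rcases this with h | h
      · exact absurd h (ne_of_gt (hFpos u))
      · linarith [h]
    have hβ0 : deriv β u = 0 := by
      have := mul_eq_zero.mp h2
      rcases this with h | h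
      · exact absurd h (ne_of_gt (hFpos u))
      · linarith [h]
    exact hreg u (by rw [hα0, hβ0])
  -- the dot product equals f³ · (α'β'' − β'α'')
  have hdot' : ∀ u, dot3 (deriv (deriv σ) u) (cross3 (σ u) (deriv σ u)) =
      (Real.sqrt (1 + α u ^ 2 + β u ^ 2))⁻¹ ^ 3 *
        (deriv α u * deriv (deriv β) u - deriv β u * deriv (deriv α) u) := by
    intro u
    rw [hdot u]
    ring
  constructor
  · constructor
    · intro h
      refine ⟨hregσ, fun u => ?_⟩
      rw [hdot' u]
      exact mul_pos (pow_pos (hFpos u) 3) (h u)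
    · rintro ⟨-, h⟩ u
      have := h u
      rw [hdot' u] at this
      nlinarith [pow_pos (hFpos u) 3]
  · constructor
    · intro h
      refine ⟨hregσ, fun u => ?_⟩
      rw [hdot' u]
      exact mul_neg_of_pos_of_neg (pow_pos (hFpos u) 3) (h u)
    · rintro ⟨-, h⟩ u
      have := h u
      rw [hdot' u] at this
      nlinarith [pow_pos (hFpos u) 3]
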